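/- Suppose 0 < δ < res'(I)/(6n) and let π be the projection π(a_{u,v}) = u. Then for every i ∈ {1,…,k} and all vertices u,v ∈ U'_i, one has d_T(π(u),π(v)) ≤ d_{T'}(u,v) < d_T(π(u),π(v)) + 2nδ'. -/

import Mathlib

/-- `a` and `b` occur consecutively (in this order) in the list `l`. -/
def ConsecIn {V : Type*} (l : List V) (a b : V) : Prop :=
  ∃ m : ℕ, l[m]? = some a ∧ l[m + 1]? = some b

section Aux

variable {V : Type*} [DecidableEq V] {T : SimpleGraph V}
  {T' : SimpleGraph {p : V × V // T.Adj p.1 p.2}}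
  {w' : Sym2 {p : V × V // T.Adj p.1 p.2} → ℝ} {δ' : ℝ}
  {L : V → List V}

lemma seg_aux
    (hT'adj : ∀ a b : {p : V × V // T.Adj p.1 p.2}, T'.Adj a b ↔
      ((a.1.1 = b.1.2 ∧ a.1.2 = b.1.1) ∨
       (a.1.1 = b.1.1 ∧ (ConsecIn (L a.1.1) a.1.2 b.1.2 ∨ ConsecIn (L a.1.1) b.1.2 a.1.2))))
    (hwpath : ∀ a b : {p : V × V // T.Adj p.1 p.2}, a.1.1 = b.1.1 → a ≠ b →
      w' s(a, b) = δ')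
    (hLnd : ∀ u, (L u).Nodup) (hLmem : ∀ u v, v ∈ L u ↔ T.Adj u v) (u : V) :
    ∀ (m j : ℕ) (x y : V) (hx : T.Adj u x) (hy : T.Adj u y),
      (L u)[j]? = some x → (L u)[j + m]? = some y →
      ∃ q : T'.Walk ⟨(u, x), hx⟩ ⟨(u, y), hy⟩, q.IsPath ∧
        (∀ c ∈ q.support, c.1.1 = u ∧ ∃ m', j ≤ m' ∧ m' ≤ j + m ∧ (L u)[m']? = some c.1.2) ∧
        (∀ e ∈ q.edges, w' e = δ') ∧ q.edges.length = m := by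
  intro m
  induction m with
  | zero =>
    intro j x y hx hy hjx hjy
    rw [Nat.add_zero] at hjy
    obtain rfl : x = y := by rw [hjx] at hjy; exact Option.some.inj hjy
    refine ⟨.nil, by simp, ?_, by simp, by simp⟩
    intro c hc
    simp only [SimpleGraph.Walk.support_nil, List.mem_singleton] at hc
    subst hc
    exact ⟨rfl, j, le_rfl, by omega, hjx⟩
  | succ m ih =>
    intro j x y hx hy hjx hjy
    have hlt1 : j + m + 1 < (L u).length := (List.getElem?_eq_some_iff.mp (by rw [← Nat.add_assoc] at hjy; exact hjy)).1
    have hlt : j + m < (L u).length := by omega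
    set y' := (L u).get ⟨j + m, hlt⟩ with hy'def
    have hjy' : (L u)[j + m]? = some y' := List.getElem?_eq_getElem hlt
    have hy'adj : T.Adj u y' := (hLmem u y').mp (List.mem_of_getElem? hjy')
    obtain ⟨q, hq, hsup, hwq, hlen⟩ := ih j x y' hx hy'adj hjx hjy'
    have hjy2 : (L u)[j + m + 1]? = some y := by rw [Nat.add_assoc]; exact hjy
    have hne : y' ≠ y := by
      intro h
      have : j + m = j + m + 1 :=
        (List.getElem?_inj hlt (hLnd u)).mp (by rw [hjy', hjy2, h])
      omega
    have hvne : (⟨(u, y'), hy'adj⟩ : {p : V × V // T.Adj p.1 p.2}) ≠ ⟨(u, y), hy⟩ := by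
      intro h
      exact hne (congrArg (fun c => c.1.2) h)
    have hadj : T'.Adj ⟨(u, y'), hy'adj⟩ ⟨(u, y), hy⟩ := by
      rw [hT'adj]
      exact Or.inr ⟨rfl, Or.inl ⟨j + m, hjy', hjy2⟩⟩
    have hnotmem : (⟨(u, y), hy⟩ : {p : V × V // T.Adj p.1 p.2}) ∉ q.support := by
      intro hmem
      obtain ⟨-, m', hm1, hm2, hm3⟩ := hsup _ hmem
      have : m' = j + m + 1 := (List.getElem?_inj (List.getElem?_eq_some_iff.mp hm3).1 (hLnd u)).mp (by rw [hm3, hjy2])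
      omega
    refine ⟨q.concat hadj, ?_, ?_, ?_, ?_⟩
    · rw [SimpleGraph.Walk.isPath_def, SimpleGraph.Walk.support_concat,
        List.nodup_append]
      exact ⟨(SimpleGraph.Walk.isPath_def q).mp hq, List.nodup_singleton _,
        by intro c hc b hc2 hcb; rw [List.mem_singleton] at hc2; subst hc2; subst hcb; exact hnotmem hc⟩
    · intro c hc
      rw [SimpleGraph.Walk.support_concat, List.mem_append,
        List.mem_singleton] at hc
      rcases hc with hc | rfl
      · obtain ⟨h1, m', hm1, hm2, hm3⟩ := hsup _ hc
        exact ⟨h1, m', hm1, by omega, hm3⟩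
      · exact ⟨rfl, j + m + 1, by omega, by omega, hjy2⟩
    · intro e he
      rw [SimpleGraph.Walk.edges_concat, List.concat_eq_append, List.mem_append,
        List.mem_singleton] at he
      rcases he with he | rfl
      · exact hwq _ he
      · exact hwpath _ _ rfl hvne
    · rw [SimpleGraph.Walk.edges_concat, List.concat_eq_append, List.length_append, hlen]
      simp

lemma seg
    (hT'adj : ∀ a b : {p : V × V // T.Adj p.1 p.2}, T'.Adj a b ↔
      ((a.1.1 = b.1.2 ∧ a.1.2 = b.1.1) ∨
       (a.1.1 = b.1.1 ∧ (ConsecIn (L a.1.1) a.1.2 b.1.2 ∨ ConsecIn (L a.1.1) b.1.2 a.1.2))))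
    (hwpath : ∀ a b : {p : V × V // T.Adj p.1 p.2}, a.1.1 = b.1.1 → a ≠ b →
      w' s(a, b) = δ')
    (hLnd : ∀ u, (L u).Nodup) (hLmem : ∀ u v, v ∈ L u ↔ T.Adj u v) (u : V)
    (x y : V) (hx : T.Adj u x) (hy : T.Adj u y) :
    ∃ (q : T'.Walk ⟨(u, x), hx⟩ ⟨(u, y), hy⟩) (t : ℕ), q.IsPath ∧
      (∀ c ∈ q.support, c.1.1 = u) ∧
      (q.edges.map w').sum = t * δ' ∧ t + 1 ≤ (L u).length := by
  obtain ⟨jx, hjx⟩ := List.mem_iff_getElem?.mp ((hLmem u x).mpr hx)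
  obtain ⟨jy, hjy⟩ := List.mem_iff_getElem?.mp ((hLmem u y).mpr hy)
  have key : ∀ (a b : V) (ha : T.Adj u a) (hb : T.Adj u b) (ja jb : ℕ), ja ≤ jb →
      (L u)[ja]? = some a → (L u)[jb]? = some b →
      ∃ (q : T'.Walk ⟨(u, a), ha⟩ ⟨(u, b), hb⟩) (t : ℕ), q.IsPath ∧
        (∀ c ∈ q.support, c.1.1 = u) ∧
        (q.edges.map w').sum = t * δ' ∧ t + 1 ≤ (L u).length := by
    intro a b ha hb ja jb hle hja hjb
    obtain ⟨q, hq, hsup, hwq, hlen⟩ := seg_aux hT'adj hwpath hLnd hLmem u (jb - ja) ja a b ha hb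
      hja (by rw [Nat.add_sub_cancel' hle]; exact hjb)
    refine ⟨q, jb - ja, hq, fun c hc => (hsup c hc).1, ?_, ?_⟩
    · have : (q.edges.map w').sum = (q.edges.map w').length • δ' :=
        List.sum_eq_card_nsmul _ _ (by intro e he; obtain ⟨e', he', rfl⟩ := List.mem_map.mp he; exact hwq e' he')
      rw [this, List.length_map, hlen, nsmul_eq_mul]
    · have : jb < (L u).length := (List.getElem?_eq_some_iff.mp hjb).1
      omega
  rcases le_total jx jy with hle | hle
  · exact key x y hx hy jx jy hle hjx hjy
  · obtain ⟨q, t, hq, hsup, hsum, ht⟩ := key y x hy hx jy jx hle hjy hjx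
    refine ⟨q.reverse, t, hq.reverse, ?_, ?_, ht⟩
    · intro c hc
      rw [SimpleGraph.Walk.support_reverse, List.mem_reverse] at hc
      exact hsup c hc
    · rw [SimpleGraph.Walk.edges_reverse, List.map_reverse, List.sum_reverse, hsum]

lemma mainwalk
    (hT'adj : ∀ a b : {p : V × V // T.Adj p.1 p.2}, T'.Adj a b ↔
      ((a.1.1 = b.1.2 ∧ a.1.2 = b.1.1) ∨
       (a.1.1 = b.1.1 ∧ (ConsecIn (L a.1.1) a.1.2 b.1.2 ∨ ConsecIn (L a.1.1) b.1.2 a.1.2))))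
    (hwpath : ∀ a b : {p : V × V // T.Adj p.1 p.2}, a.1.1 = b.1.1 → a ≠ b →
      w' s(a, b) = δ')
    (hLnd : ∀ u, (L u).Nodup) (hLmem : ∀ u v, v ∈ L u ↔ T.Adj u v)
    (w : Sym2 V → ℝ) (S : Set V)
    (hwS : ∀ (a b : {p : V × V // T.Adj p.1 p.2}), a.1.1 = b.1.2 → a.1.2 = b.1.1 →
      a.1.1 ∈ S → a.1.2 ∈ S → w' s(a, b) = w s(a.1.1, a.1.2)) :
    ∀ {u z : V} (p : T.Walk u z), p.IsPath → (∀ v ∈ p.support, v ∈ S) →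
      ∀ (x y : V) (hx : T.Adj u x) (hy : T.Adj z y),
      ∃ (q : T'.Walk ⟨(u, x), hx⟩ ⟨(z, y), hy⟩) (t : ℕ), q.IsPath ∧
        (∀ c ∈ q.support, c.1.1 ∈ p.support) ∧
        (q.edges.map w').sum = (p.edges.map w).sum + t * δ' ∧
        t + p.support.length ≤ (p.support.map fun v => (L v).length).sum := by
  intro u z p
  induction p with
  | @nil u₀ =>
    intro _ _ x y hx hy
    obtain ⟨q, t, hq, hsup, hsum, ht⟩ := seg hT'adj hwpath hLnd hLmem u₀ x y hx hy
    refine ⟨q, t, hq, ?_, by simpa using hsum, by simpa using ht⟩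
    intro c hc
    simp [hsup c hc]
  | @cons u u₁ z h p' ih =>
    intro hp hS x y hx hy
    rw [SimpleGraph.Walk.cons_isPath_iff] at hp
    have hS' : ∀ v ∈ p'.support, v ∈ S := fun v hv => hS v (by simp [hv])
    obtain ⟨q₂, t₂, hq₂, hsup₂, hsum₂, ht₂⟩ := ih hp.1 hS' u y h.symm hy
    obtain ⟨q₁, t₁, hq₁, hsup₁, hsum₁, ht₁⟩ := seg hT'adj hwpath hLnd hLmem u x u₁ hx h
    have hadj : T'.Adj ⟨(u, u₁), h⟩ ⟨(u₁, u), h.symm⟩ := by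
      rw [hT'adj]; exact Or.inl ⟨rfl, rfl⟩
    refine ⟨q₁.append (SimpleGraph.Walk.cons hadj q₂), t₁ + t₂, ?_, ?_, ?_, ?_⟩
    · rw [SimpleGraph.Walk.isPath_def, SimpleGraph.Walk.support_append,
        SimpleGraph.Walk.support_cons, List.tail_cons, List.nodup_append]
      refine ⟨(SimpleGraph.Walk.isPath_def q₁).mp hq₁, (SimpleGraph.Walk.isPath_def q₂).mp hq₂, ?_⟩
      intro c hc1 c₂ hc2 hcc
      subst hcc
      have h1 : c.1.1 = u := hsup₁ c hc1
      have h2 : c.1.1 ∈ p'.support := hsup₂ c hc2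
      rw [h1] at h2
      exact hp.2 h2
    · intro c hc
      rw [SimpleGraph.Walk.support_append, SimpleGraph.Walk.support_cons, List.tail_cons,
        List.mem_append] at hc
      rw [SimpleGraph.Walk.support_cons]
      rcases hc with hc | hc
      · rw [hsup₁ c hc]; simp
      · simp [hsup₂ c hc]
    · rw [SimpleGraph.Walk.edges_append, SimpleGraph.Walk.edges_cons, List.map_append,
        List.sum_append, List.map_cons, List.sum_cons, hsum₁, hsum₂,
        SimpleGraph.Walk.edges_cons, List.map_cons, List.sum_cons]
      have hmid : w' s(⟨(u, u₁), h⟩, ⟨(u₁, u), h.symm⟩) = w s(u, u₁) :=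
        hwS _ _ rfl rfl (hS u (by simp)) (hS u₁ (by simp))
      rw [hmid]
      push_cast
      ring
    · rw [SimpleGraph.Walk.support_cons, List.length_cons, List.map_cons, List.sum_cons]
      omega
end Aux

/-- Transformation of a tree instance with pairwise disjoint cells into one of maximum
degree 3: distances within a single transformed cell.  The new tree `T'` has a vertex `a_{u,v}` for every ordered pair of adjacent
vertices of `T` (the subtype `{p : V × V // T.Adj p.1 p.2}`): `a_{u,v}` and `a_{v,u}` are
joined by an edge of length `λ(uv)` if `u,v` lie in a common cell `U i` and `λ(uv) − δ`
otherwise, and for each `u` the vertices `a_{u,v}` are connected into a path (given by an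
enumeration `L u` of the neighbours of `u`) whose edges all have length `δ' = δ/(4n)`.
The cells become `U'ᵢ = {a_{u,v} : u ∈ Uᵢ}` and `π(a_{u,v}) = u` is the projection.
If `0 < δ < res'(I)/(6n)`, then for every `i` and all `a, b ∈ U'ᵢ` we have
`d_T(π a, π b) ≤ d_{T'}(a, b) < d_T(π a, π b) + 2nδ'`. -/
theorem degree_three_transform_dist_same_cell
    {V : Type*} [Fintype V] [DecidableEq V] (T : SimpleGraph V) (hT : T.IsTree)
    (hn : 2 ≤ Fintype.card V)
    (w : Sym2 V → ℝ) (hw : ∀ e ∈ T.edgeSet, 0 < w e)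
    (d : V → V → ℝ)
    (hd : ∀ (u v : V) (p : T.Walk u v), p.IsPath → (p.edges.map w).sum = d u v)
    (k : ℕ) (U : Fin k → Set V)
    (hcover : (⋃ i, U i) = Set.univ)
    (hdisj : ∀ i j, i ≠ j → Disjoint (U i) (U j))
    (hUconn : ∀ i, (T.induce (U i)).Connected)
    -- the resolution `res'(I)`: the minimum positive difference of distances
    (resI : ℝ)
    (hres1 : ∀ v v' u : V, 0 < d v u - d v' u → resI ≤ d v u - d v' u)
    (hres2 : ∃ v v' u : V, 0 < d v u - d v' u ∧ resI = d v u - d v' u)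
    (δ δ' : ℝ) (hδ : 0 < δ) (hδres : δ < resI / (6 * Fintype.card V))
    (hδ' : δ' = δ / (4 * Fintype.card V))
    -- an enumeration of the neighbours of each vertex
    (L : V → List V) (hLnd : ∀ u, (L u).Nodup) (hLmem : ∀ u v, v ∈ L u ↔ T.Adj u v)
    -- the transformed tree `T'`
    (T' : SimpleGraph {p : V × V // T.Adj p.1 p.2})
    (hT'adj : ∀ a b : {p : V × V // T.Adj p.1 p.2}, T'.Adj a b ↔
      ((a.1.1 = b.1.2 ∧ a.1.2 = b.1.1) ∨
       (a.1.1 = b.1.1 ∧ (ConsecIn (L a.1.1) a.1.2 b.1.2 ∨ ConsecIn (L a.1.1) b.1.2 a.1.2))))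
    -- its edge-lengths
    (w' : Sym2 {p : V × V // T.Adj p.1 p.2} → ℝ)
    (hwsame : ∀ a b : {p : V × V // T.Adj p.1 p.2}, a.1.1 = b.1.2 → a.1.2 = b.1.1 →
      (∃ i, a.1.1 ∈ U i ∧ a.1.2 ∈ U i) → w' s(a, b) = w s(a.1.1, a.1.2))
    (hwdiff : ∀ a b : {p : V × V // T.Adj p.1 p.2}, a.1.1 = b.1.2 → a.1.2 = b.1.1 →
      (¬ ∃ i, a.1.1 ∈ U i ∧ a.1.2 ∈ U i) → w' s(a, b) = w s(a.1.1, a.1.2) - δ)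
    (hwpath : ∀ a b : {p : V × V // T.Adj p.1 p.2}, a.1.1 = b.1.1 → a ≠ b →
      w' s(a, b) = δ')
    -- its tree distance
    (d' : {p : V × V // T.Adj p.1 p.2} → {p : V × V // T.Adj p.1 p.2} → ℝ)
    (hd' : ∀ (a b : {p : V × V // T.Adj p.1 p.2}) (p : T'.Walk a b), p.IsPath →
      (p.edges.map w').sum = d' a b) :
    ∀ (i : Fin k) (a b : {p : V × V // T.Adj p.1 p.2}), a.1.1 ∈ U i → b.1.1 ∈ U i →
      d a.1.1 b.1.1 ≤ d' a b ∧
      d' a b < d a.1.1 b.1.1 + 2 * Fintype.card V * δ' := by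
    classical
  intro i a b ha hb
  have hcard : (0:ℝ) < Fintype.card V := by positivity
  have hδ'pos : 0 < δ' := by rw [hδ']; positivity
  -- a path in T from a.1.1 to b.1.1 inside U i
  obtain ⟨w₀⟩ := (hUconn i).preconnected ⟨a.1.1, ha⟩ ⟨b.1.1, hb⟩
  let pp := w₀.toPath
  let f : T.induce (U i) →g T := ⟨Subtype.val, fun {c d} h => h⟩
  let p : T.Walk a.1.1 b.1.1 := SimpleGraph.Walk.map f pp.1
  have hp : p.IsPath := SimpleGraph.Walk.map_isPath_of_injective Subtype.val_injective pp.2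
  have hpS : ∀ v ∈ p.support, v ∈ U i := by
    intro v hv
    rw [SimpleGraph.Walk.support_map, List.mem_map] at hv
    obtain ⟨c, _, rfl⟩ := hv
    exact c.2
  -- apply the main construction
  obtain ⟨q, t, hq, hqsup, hqsum, hqt⟩ := mainwalk hT'adj hwpath hLnd hLmem w (U i)
    (fun c e h1 h2 hc1 hc2 => hwsame c e h1 h2 ⟨i, hc1, hc2⟩) p hp hpS a.1.2 b.1.2 a.2 b.2
  have hea : (⟨(a.1.1, a.1.2), a.2⟩ : {p : V × V // T.Adj p.1 p.2}) = a := rfl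
  have heb : (⟨(b.1.1, b.1.2), b.2⟩ : {p : V × V // T.Adj p.1 p.2}) = b := rfl
  let q' : T'.Walk a b := q.copy hea heb
  have hq' : q'.IsPath := by rw [SimpleGraph.Walk.isPath_copy]; exact hq
  have hq'sum : (q'.edges.map w').sum = d a.1.1 b.1.1 + t * δ' := by
    rw [SimpleGraph.Walk.edges_copy, hqsum, hd a.1.1 b.1.1 p hp]
  have hdval : d' a b = d a.1.1 b.1.1 + t * δ' := by
    rw [← hd' a b q' hq', hq'sum]
  -- the degree bound
  have hLdeg : ∀ v : V, (L v).length = T.degree v := by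
    intro v
    rw [← List.toFinset_card_of_nodup (hLnd v)]
    congr 1
    ext x
    rw [List.mem_toFinset, hLmem, SimpleGraph.mem_neighborFinset]
  have hsum1 : (p.support.map fun v => (L v).length).sum
      = ∑ v ∈ p.support.toFinset, (L v).length :=
    (List.sum_toFinset _ hp.support_nodup).symm
  have hsum2 : ∑ v ∈ p.support.toFinset, (L v).length ≤ ∑ v : V, (L v).length :=
    Finset.sum_le_sum_of_subset (Finset.subset_univ _)
  have hsum3 : ∑ v : V, (L v).length = 2 * T.edgeFinset.card := by
    rw [← SimpleGraph.sum_degrees_eq_twice_card_edges]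
    exact Finset.sum_congr rfl fun v _ => hLdeg v
  have hecard : T.edgeFinset.card + 1 = Fintype.card V := hT.card_edgeFinset
  have hsuplen : 1 ≤ p.support.length := by
    cases hsp : p.support with
    | nil => exact absurd hsp p.support_ne_nil
    | cons _ _ => simp
  have htbound : t < 2 * Fintype.card V := by omega
  have htreal : (t : ℝ) * δ' < 2 * Fintype.card V * δ' := by
    apply mul_lt_mul_of_pos_right _ hδ'pos
    exact_mod_cast htbound
  constructor
  · rw [hdval]
    have : (0:ℝ) ≤ t * δ' := by positivity
    linarith
  · rw [hdval]
    linarith
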